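/- Deterministic Oseledec theorem in dimension 2 (Theorem 3.6): Let (U(n))_{n\ge 1} be a sequence of real 2\times 2 matrices of determinant 1 such that (i) the limit \gamma := lim_{n\to\infty} (1/n) \log \|U(n)\| exists and is finite, and (ii) lim_{n\to\infty} (1/n) \log \|U(n) U(n-1)^{-1}\| = 0 (with the convention U(0) = I). Then there exists a nonzero vector F_0 \in \mathbb{R}^2 with lim_{n\to\infty} (1/n) \log |U(n) F_0| = -\gamma, and for every F \in \mathbb{R}^2 that is not a scalar multiple of F_0 one has lim_{n\to\infty} (1/n) \log |U(n) F| = \gamma. In particular, for every \varepsilon > 0 there exists C(\varepsilon) > 0 such that |U(n) F_0| \le C(\varepsilon) e^{-(\gamma - \varepsilon) n} for all n \ge 1. -/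

import Mathlib

/-- The operator norm of a real 2×2 matrix with respect to the Euclidean norm on `ℝ²`. -/
noncomputable def opNorm (A : Matrix (Fin 2) (Fin 2) ℝ) : ℝ :=
  ‖Matrix.toEuclideanCLM (𝕜 := ℝ) A‖

/-- The Euclidean norm of a vector in `ℝ²`. -/
noncomputable def eNorm (v : Fin 2 → ℝ) : ℝ :=
  Real.sqrt (v 0 ^ 2 + v 1 ^ 2)

namespace Oseledec
open Filter Real

noncomputable def toE (v : Fin 2 → ℝ) : EuclideanSpace ℝ (Fin 2) := (WithLp.equiv 2 _).symm v

lemma toE_apply (v : Fin 2 → ℝ) (i : Fin 2) : toE v i = v i := rfl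

lemma eNorm_eq (v : Fin 2 → ℝ) : eNorm v = ‖toE v‖ := by
  rw [EuclideanSpace.norm_eq, Fin.sum_univ_two]
  simp [eNorm, toE_apply, sq_abs]

lemma toE_sub (x y : Fin 2 → ℝ) : toE (x - y) = toE x - toE y := rfl
lemma toE_add (x y : Fin 2 → ℝ) : toE (x + y) = toE x + toE y := rfl

lemma eNorm_nonneg (v : Fin 2 → ℝ) : 0 ≤ eNorm v := Real.sqrt_nonneg _

lemma eNorm_sq (v : Fin 2 → ℝ) : eNorm v ^ 2 = v 0 ^ 2 + v 1 ^ 2 :=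
  Real.sq_sqrt (by positivity)

lemma eNorm_smul (c : ℝ) (v : Fin 2 → ℝ) : eNorm (c • v) = |c| * eNorm v := by
  have : eNorm (c • v) = Real.sqrt (c ^ 2 * (v 0 ^ 2 + v 1 ^ 2)) := by
    simp only [eNorm, Pi.smul_apply, smul_eq_mul]; ring_nf
  rw [this, Real.sqrt_mul (sq_nonneg c), Real.sqrt_sq_eq_abs, eNorm]

lemma eNorm_eq_zero {v : Fin 2 → ℝ} (h : eNorm v = 0) : v = 0 := by
  have h2 := eNorm_sq v
  rw [h] at h2
  have h0 : v 0 = 0 := by nlinarith [sq_nonneg (v 0), sq_nonneg (v 1)]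
  have h1 : v 1 = 0 := by nlinarith [sq_nonneg (v 0), sq_nonneg (v 1)]
  funext i; fin_cases i <;> simpa

lemma eNorm_pos {v : Fin 2 → ℝ} (h : v ≠ 0) : 0 < eNorm v :=
  lt_of_le_of_ne (eNorm_nonneg v) (fun h' => h (eNorm_eq_zero h'.symm))

lemma eNorm_sub_le (x y : Fin 2 → ℝ) : eNorm (x - y) ≤ eNorm x + eNorm y := by
  rw [eNorm_eq, eNorm_eq, eNorm_eq, toE_sub]; exact norm_sub_le _ _

lemma eNorm_add_le (x y : Fin 2 → ℝ) : eNorm (x + y) ≤ eNorm x + eNorm y := by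
  rw [eNorm_eq, eNorm_eq, eNorm_eq, toE_add]; exact norm_add_le _ _

lemma clm_apply (A : Matrix (Fin 2) (Fin 2) ℝ) (v : Fin 2 → ℝ) :
    Matrix.toEuclideanCLM (𝕜 := ℝ) A (toE v) = toE (A.mulVec v) := by
  rfl

lemma eNorm_mulVec_le (A : Matrix (Fin 2) (Fin 2) ℝ) (v : Fin 2 → ℝ) :
    eNorm (A.mulVec v) ≤ opNorm A * eNorm v := by
  rw [eNorm_eq, eNorm_eq, ← clm_apply]
  exact ContinuousLinearMap.le_opNorm _ _

lemma opNorm_nonneg (A : Matrix (Fin 2) (Fin 2) ℝ) : 0 ≤ opNorm A := norm_nonneg _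

lemma opNorm_mul_le (A B : Matrix (Fin 2) (Fin 2) ℝ) :
    opNorm (A * B) ≤ opNorm A * opNorm B := by
  unfold opNorm
  rw [map_mul]
  exact norm_mul_le _ _

/-- dot product on ℝ² -/
def dot (x y : Fin 2 → ℝ) : ℝ := x 0 * y 0 + x 1 * y 1

/-- rotation by 90° -/
def perp (v : Fin 2 → ℝ) : Fin 2 → ℝ := ![-v 1, v 0]

lemma perp_zero (v : Fin 2 → ℝ) : perp v 0 = -v 1 := rfl
lemma perp_one (v : Fin 2 → ℝ) : perp v 1 = v 0 := rfl

lemma eNorm_perp (v : Fin 2 → ℝ) : eNorm (perp v) = eNorm v := by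
  simp [eNorm, perp]; ring_nf

lemma perp_smul (c : ℝ) (v : Fin 2 → ℝ) : perp (c • v) = c • perp v := by
  funext i; fin_cases i <;> simp [perp] <;> ring

lemma dot_smul_right (c : ℝ) (x y : Fin 2 → ℝ) : dot x (c • y) = c * dot x y := by
  simp [dot]; ring

lemma abs_dot_le (x y : Fin 2 → ℝ) : |dot x y| ≤ eNorm x * eNorm y := by
  have h1 : (dot x y) ^ 2 ≤ (eNorm x * eNorm y) ^ 2 := by
    have := eNorm_sq x; have := eNorm_sq y
    have key : (dot x y) ^ 2 + (x 0 * y 1 - x 1 * y 0) ^ 2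
        = (x 0 ^ 2 + x 1 ^ 2) * (y 0 ^ 2 + y 1 ^ 2) := by unfold dot; ring
    nlinarith [sq_nonneg (x 0 * y 1 - x 1 * y 0)]
  have h2 : 0 ≤ eNorm x * eNorm y := mul_nonneg (eNorm_nonneg x) (eNorm_nonneg y)
  nlinarith [abs_nonneg (dot x y), sq_abs (dot x y)]

lemma exists_min (A : Matrix (Fin 2) (Fin 2) ℝ) :
    ∃ v : Fin 2 → ℝ, eNorm v = 1 ∧
      ∀ u : Fin 2 → ℝ, eNorm u = 1 → eNorm (A.mulVec v) ≤ eNorm (A.mulVec u) := by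
  have hcompact : IsCompact (Metric.sphere (0 : EuclideanSpace ℝ (Fin 2)) 1) :=
    isCompact_sphere 0 1
  have hne : (Metric.sphere (0 : EuclideanSpace ℝ (Fin 2)) 1).Nonempty :=
    NormedSpace.sphere_nonempty.2 zero_le_one
  have hcont : ContinuousOn (fun x : EuclideanSpace ℝ (Fin 2) =>
      ‖Matrix.toEuclideanCLM (𝕜 := ℝ) A x‖) (Metric.sphere 0 1) :=
    ((Matrix.toEuclideanCLM (𝕜 := ℝ) A).continuous.norm).continuousOn
  obtain ⟨x, hx, hxmin⟩ := hcompact.exists_isMinOn hne hcont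
  refine ⟨WithLp.equiv 2 _ x, ?_, ?_⟩
  · have : toE (WithLp.equiv 2 _ x) = x := by simp [toE]
    rw [eNorm_eq, this]
    simpa [dist_eq_norm] using hx
  · intro u hu
    have hxu : toE (WithLp.equiv 2 _ x) = x := by simp [toE]
    rw [eNorm_eq, eNorm_eq, ← clm_apply, ← clm_apply, hxu]
    have hu' : toE u ∈ Metric.sphere (0 : EuclideanSpace ℝ (Fin 2)) 1 := by
      simp only [Metric.mem_sphere, dist_eq_norm, sub_zero]
      rw [← eNorm_eq]; exact hu
    exact hxmin hu'

lemma eNorm_zero : eNorm (0 : Fin 2 → ℝ) = 0 := by simp [eNorm]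

lemma le_of_sq {a b : ℝ} (ha : 0 ≤ a) (hb : 0 ≤ b) (h : a ^ 2 ≤ b ^ 2) : a ≤ b := by nlinarith

lemma cross_mulVec (A : Matrix (Fin 2) (Fin 2) ℝ) (x y : Fin 2 → ℝ) :
    (A.mulVec x) 0 * (A.mulVec y) 1 - (A.mulVec x) 1 * (A.mulVec y) 0
      = A.det * (x 0 * y 1 - x 1 * y 0) := by
  simp [Matrix.mulVec, dotProduct, Fin.sum_univ_two, Matrix.det_fin_two]
  ring

set_option maxHeartbeats 1600000 in
lemma sl2_key (A : Matrix (Fin 2) (Fin 2) ℝ) (hA : A.det = 1) :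
    ∃ v : Fin 2 → ℝ, eNorm v = 1 ∧ 1 ≤ opNorm A ∧
      eNorm (A.mulVec v) = (opNorm A)⁻¹ ∧
      (∀ u, |dot u (perp v)| * opNorm A ≤ eNorm (A.mulVec u)) ∧
      (∀ u, eNorm u ≤ opNorm A * eNorm (A.mulVec u)) := by
  obtain ⟨v, hv1, hvmin⟩ := exists_min A
  set w := perp v with hw
  clear_value w
  have hw1 : eNorm w = 1 := by rw [hw, eNorm_perp]; exact hv1
  have hv2 : v 0 ^ 2 + v 1 ^ 2 = 1 := by
    have h := eNorm_sq v; rw [hv1] at h; linarith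
  set p := A.mulVec v with hp
  set q := A.mulVec w with hq
  clear_value p q
  -- scaled minimality
  have hmin' : ∀ u : Fin 2 → ℝ, eNorm p * eNorm u ≤ eNorm (A.mulVec u) := by
    intro u
    by_cases hu : u = 0
    · simp [hu, Matrix.mulVec_zero, eNorm_zero]
    · have hupos := eNorm_pos hu
      have hunit : eNorm ((eNorm u)⁻¹ • u) = 1 := by
        rw [eNorm_smul, abs_of_pos (inv_pos.2 hupos)]
        field_simp
      have h2 := hvmin _ hunit
      rw [Matrix.mulVec_smul, eNorm_smul, abs_of_pos (inv_pos.2 hupos)] at h2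
      calc eNorm p * eNorm u ≤ ((eNorm u)⁻¹ * eNorm (A.mulVec u)) * eNorm u := by
            exact mul_le_mul_of_nonneg_right h2 (le_of_lt hupos)
        _ = eNorm (A.mulVec u) := by field_simp
  have hplq : eNorm p ≤ eNorm q := by rw [hq]; exact hvmin w hw1
  -- orthogonality of images
  have hS : ∀ t : ℝ, eNorm (v + t • w) ^ 2 = 1 + t ^ 2 := by
    intro t
    rw [eNorm_sq]
    simp only [Pi.add_apply, Pi.smul_apply, smul_eq_mul, hw, perp_zero, perp_one]
    linear_combination (1 + t ^ 2) * hv2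
  have hexp : ∀ t : ℝ, eNorm (A.mulVec (v + t • w)) ^ 2
      = eNorm p ^ 2 + 2 * t * dot p q + t ^ 2 * eNorm q ^ 2 := by
    intro t
    have h1 : A.mulVec (v + t • w) = p + t • q := by
      rw [Matrix.mulVec_add, Matrix.mulVec_smul, ← hp, ← hq]
    rw [h1, eNorm_sq, eNorm_sq, eNorm_sq]
    simp only [Pi.add_apply, Pi.smul_apply, smul_eq_mul]
    unfold dot
    ring
  have ht : ∀ t : ℝ, 0 ≤ 2 * t * dot p q + t ^ 2 * (eNorm q ^ 2 - eNorm p ^ 2) := by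
    intro t
    have h1 := hmin' (v + t • w)
    have h2 : eNorm p ^ 2 * eNorm (v + t • w) ^ 2 ≤ eNorm (A.mulVec (v + t • w)) ^ 2 := by
      have hnn1 := eNorm_nonneg p
      have hnn2 := eNorm_nonneg (v + t • w)
      have h3 := mul_self_le_mul_self (mul_nonneg hnn1 hnn2) h1
      nlinarith [h3]
    rw [hS t, hexp t] at h2
    nlinarith
  have hc : dot p q = 0 := by
    set c := dot p q with hcdef
    set d := eNorm q ^ 2 - eNorm p ^ 2 with hddef
    have hd : 0 ≤ d := by
      have := eNorm_nonneg p; have := eNorm_nonneg q; nlinarith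
    have hd1 : (0:ℝ) < d + 1 := by linarith
    have h0 := ht (-c / (d + 1))
    have hne : (d + 1) ≠ 0 := ne_of_gt hd1
    have key2 : 0 ≤ (2 * (-c / (d + 1)) * c + (-c / (d + 1)) ^ 2 * d) * (d + 1) ^ 2 :=
      mul_nonneg h0 (by positivity)
    have hexpand : (2 * (-c / (d + 1)) * c + (-c / (d + 1)) ^ 2 * d) * (d + 1) ^ 2
        = -(c ^ 2) * (d + 2) := by
      field_simp
      ring
    rw [hexpand] at key2
    have hc2 : c ^ 2 = 0 := by nlinarith [sq_nonneg c]
    exact pow_eq_zero_iff (by norm_num : (2:ℕ) ≠ 0) |>.mp hc2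
  have hcross : p 0 * q 1 - p 1 * q 0 = 1 := by
    rw [hp, hq, cross_mulVec, hA]
    simp only [hw, perp_zero, perp_one]
    linarith [hv2]
  have hpq : eNorm p * eNorm q = 1 := by
    have hId : dot p q ^ 2 + (p 0 * q 1 - p 1 * q 0) ^ 2
        = (p 0 ^ 2 + p 1 ^ 2) * (q 0 ^ 2 + q 1 ^ 2) := by unfold dot; ring
    rw [hc, hcross] at hId
    have h1 : eNorm p ^ 2 * eNorm q ^ 2 = 1 := by
      rw [eNorm_sq, eNorm_sq]; linarith
    have hx : 0 ≤ eNorm p * eNorm q := mul_nonneg (eNorm_nonneg p) (eNorm_nonneg q)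
    have hx2 : (eNorm p * eNorm q) ^ 2 = 1 := by
      have : (eNorm p * eNorm q) ^ 2 = eNorm p ^ 2 * eNorm q ^ 2 := by ring
      rw [this, h1]
    nlinarith [sq_nonneg (eNorm p * eNorm q - 1), sq_nonneg (eNorm p * eNorm q + 1)]
  have hqpos : 0 < eNorm q := by nlinarith [eNorm_nonneg p, eNorm_nonneg q]
  have hq1 : 1 ≤ eNorm q := by nlinarith [eNorm_nonneg p]
  have hp2q2 : eNorm p ^ 2 ≤ eNorm q ^ 2 := by nlinarith [eNorm_nonneg p]
  -- decomposition
  have hdecomp : ∀ u : Fin 2 → ℝ, u = (dot u v) • v + (dot u w) • w := by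
    intro u
    funext i
    fin_cases i <;>
      simp only [Pi.add_apply, Pi.smul_apply, smul_eq_mul, hw, perp, dot,
        Matrix.cons_val_zero, Matrix.cons_val_one, Matrix.head_cons, Fin.zero_eta, Fin.mk_one,
        Fin.isValue]
    · linear_combination (-(u 0)) * hv2
    · linear_combination (-(u 1)) * hv2
  have himg : ∀ u : Fin 2 → ℝ, eNorm (A.mulVec u) ^ 2
      = (dot u v) ^ 2 * eNorm p ^ 2 + (dot u w) ^ 2 * eNorm q ^ 2 := by
    intro u
    have h1 : A.mulVec u = (dot u v) • p + (dot u w) • q := by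
      conv_lhs => rw [hdecomp u]
      rw [Matrix.mulVec_add, Matrix.mulVec_smul, Matrix.mulVec_smul, ← hp, ← hq]
    rw [h1, eNorm_sq, eNorm_sq, eNorm_sq]
    simp only [Pi.add_apply, Pi.smul_apply, smul_eq_mul]
    have hc' : p 0 * q 0 + p 1 * q 1 = 0 := hc
    linear_combination (2 * dot u v * dot u w) * hc'
  have hparseval : ∀ u : Fin 2 → ℝ, (dot u v) ^ 2 + (dot u w) ^ 2 = eNorm u ^ 2 := by
    intro u
    rw [eNorm_sq]
    simp only [hw]
    unfold dot
    simp only [perp_zero, perp_one]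
    linear_combination (u 0 ^ 2 + u 1 ^ 2) * hv2
  -- opNorm A = eNorm q
  have le1 : eNorm q ≤ opNorm A := by
    have h := eNorm_mulVec_le A w
    rw [hw1, mul_one] at h
    rw [hq]; exact h
  have le2 : opNorm A ≤ eNorm q := by
    have hbound : ∀ y : Fin 2 → ℝ, eNorm (A.mulVec y) ≤ eNorm q * eNorm y := by
      intro y
      apply le_of_sq (eNorm_nonneg _) (mul_nonneg (le_of_lt hqpos) (eNorm_nonneg _))
      rw [mul_pow, himg y, ← hparseval y]
      have hkey := mul_le_mul_of_nonneg_left hp2q2 (sq_nonneg (dot y v))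
      have hexpand : eNorm q ^ 2 * (dot y v ^ 2 + dot y w ^ 2)
          = dot y v ^ 2 * eNorm q ^ 2 + dot y w ^ 2 * eNorm q ^ 2 := by ring
      rw [hexpand]
      linarith [hkey]
    unfold opNorm
    apply ContinuousLinearMap.opNorm_le_bound _ (le_of_lt hqpos)
    intro x
    obtain ⟨y, rfl⟩ := (WithLp.equiv 2 (Fin 2 → ℝ)).symm.surjective x
    have hy : ((WithLp.equiv 2 (Fin 2 → ℝ)).symm y) = toE y := rfl
    rw [hy, clm_apply, ← eNorm_eq, ← eNorm_eq]
    exact hbound y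
  have hNq : opNorm A = eNorm q := le_antisymm le2 le1
  refine ⟨v, hv1, ?_, ?_, ?_, ?_⟩
  · rw [hNq]; exact hq1
  · rw [← hp, hNq, inv_eq_one_div, eq_div_iff (ne_of_gt hqpos)]
    exact hpq
  · intro u
    rw [hNq, ← hw]
    apply le_of_sq (mul_nonneg (abs_nonneg _) (le_of_lt hqpos)) (eNorm_nonneg _)
    rw [mul_pow, sq_abs, himg u]
    linarith [mul_nonneg (sq_nonneg (dot u v)) (sq_nonneg (eNorm p))]
  · intro u
    rw [hNq]
    apply le_of_sq (eNorm_nonneg _) (mul_nonneg (le_of_lt hqpos) (eNorm_nonneg _))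
    rw [mul_pow, himg u, ← hparseval u]
    have hq2 : 1 ≤ eNorm q ^ 2 := by nlinarith
    have hq4 : 1 ≤ (eNorm q ^ 2) ^ 2 := by nlinarith
    have hqp2 : eNorm q ^ 2 * eNorm p ^ 2 = 1 := by
      rw [show eNorm q ^ 2 * eNorm p ^ 2 = (eNorm p * eNorm q) ^ 2 by ring, hpq, one_pow]
    have hrw : eNorm q ^ 2 * (dot u v ^ 2 * eNorm p ^ 2 + dot u w ^ 2 * eNorm q ^ 2)
        = dot u v ^ 2 * (eNorm q ^ 2 * eNorm p ^ 2) + dot u w ^ 2 * (eNorm q ^ 2) ^ 2 := by ring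
    rw [hrw, hqp2]
    linarith [mul_le_mul_of_nonneg_left hq4 (sq_nonneg (dot u w))]

lemma step_bound {x y : Fin 2 → ℝ} (hx : eNorm x = 1) (hy : eNorm y = 1) (hxy : 0 ≤ dot x y) :
    eNorm (x - y) ≤ Real.sqrt 2 * |dot x (perp y)| := by
  have hx2 : x 0 ^ 2 + x 1 ^ 2 = 1 := by have h := eNorm_sq x; rw [hx] at h; linarith
  have hy2 : y 0 ^ 2 + y 1 ^ 2 = 1 := by have h := eNorm_sq y; rw [hy] at h; linarith
  have hid : dot x y ^ 2 + dot x (perp y) ^ 2 = 1 := by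
    unfold dot
    rw [perp_zero, perp_one]
    linear_combination (y 0 ^ 2 + y 1 ^ 2) * hx2 + hy2
  have hd1 : dot x y ≤ 1 := by nlinarith [sq_nonneg (dot x (perp y))]
  apply le_of_sq (eNorm_nonneg _) (mul_nonneg (Real.sqrt_nonneg 2) (abs_nonneg _))
  rw [mul_pow, sq_abs, Real.sq_sqrt (by norm_num : (0:ℝ) ≤ 2), eNorm_sq]
  simp only [Pi.sub_apply]
  have hsub : (x 0 - y 0) ^ 2 + (x 1 - y 1) ^ 2 = 2 - 2 * dot x y := by
    unfold dot; linear_combination hx2 + hy2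
  rw [hsub]
  nlinarith [hid, mul_nonneg hxy (by linarith : (0:ℝ) ≤ 1 - dot x y)]

lemma tendsto_inv_mul_const (c : ℝ) :
    Filter.Tendsto (fun n : ℕ => (1 / (n : ℝ)) * c) atTop (nhds 0) := by
  simpa using tendsto_one_div_atTop_nhds_zero_nat.mul_const c

lemma ev_bounds {f : ℕ → ℝ} {L : ℝ}
    (hf : Filter.Tendsto (fun n : ℕ => (1 / (n : ℝ)) * Real.log (f n)) atTop (nhds L))
    (hfpos : ∀ n, 0 < f n) {δ : ℝ} (hδ : 0 < δ) :
    ∀ᶠ n : ℕ in atTop, f n ≤ Real.exp ((L + δ) * n) ∧ Real.exp ((L - δ) * n) ≤ f n := by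
  obtain ⟨N, hN⟩ := Metric.tendsto_atTop.mp hf δ hδ
  filter_upwards [eventually_ge_atTop (max N 1)] with n hn
  have hn1 : 1 ≤ n := le_trans (le_max_right _ _) hn
  have hnN : N ≤ n := le_trans (le_max_left _ _) hn
  have h2 := hN n hnN
  rw [Real.dist_eq, abs_lt] at h2
  have hnpos : (0:ℝ) < n := by exact_mod_cast hn1
  have hlog : Real.log (f n) = ((1 / (n:ℝ)) * Real.log (f n)) * n := by field_simp
  constructor
  · have h3 : Real.log (f n) ≤ (L + δ) * n := by
      rw [hlog]
      exact mul_le_mul_of_nonneg_right (by linarith [h2.2]) (le_of_lt hnpos)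
    calc f n = Real.exp (Real.log (f n)) := (Real.exp_log (hfpos n)).symm
      _ ≤ _ := Real.exp_le_exp.mpr h3
  · have h3 : (L - δ) * n ≤ Real.log (f n) := by
      rw [hlog]
      exact mul_le_mul_of_nonneg_right (by linarith [h2.1]) (le_of_lt hnpos)
    calc Real.exp ((L - δ) * n) ≤ Real.exp (Real.log (f n)) := Real.exp_le_exp.mpr h3
      _ = f n := Real.exp_log (hfpos n)

lemma global_bound {x : ℕ → ℝ} (hx : ∀ n, 0 ≤ x n) (c : ℝ) {C₀ : ℝ} (hC₀ : 0 < C₀)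
    (h : ∀ᶠ n : ℕ in atTop, x n ≤ C₀ * Real.exp (c * n)) :
    ∃ C : ℝ, 0 < C ∧ ∀ n : ℕ, x n ≤ C * Real.exp (c * n) := by
  obtain ⟨M, hM⟩ := eventually_atTop.mp h
  have hsum : 0 ≤ ∑ k ∈ Finset.range M, x k * Real.exp (-(c * k)) := by
    apply Finset.sum_nonneg
    intro k _
    exact mul_nonneg (hx k) (le_of_lt (Real.exp_pos _))
  refine ⟨C₀ + ∑ k ∈ Finset.range M, x k * Real.exp (-(c * k)), by linarith, ?_⟩
  intro n
  by_cases hn : M ≤ n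
  · have h1 := hM n hn
    have h2 : 0 ≤ (∑ k ∈ Finset.range M, x k * Real.exp (-(c * k))) * Real.exp (c * n) :=
      mul_nonneg hsum (le_of_lt (Real.exp_pos _))
    nlinarith
  · have hnM : n ∈ Finset.range M := Finset.mem_range.2 (lt_of_not_ge hn)
    have hterm : x n * Real.exp (-(c * n)) ≤ ∑ k ∈ Finset.range M, x k * Real.exp (-(c * k)) :=
      Finset.single_le_sum (f := fun k => x k * Real.exp (-(c * k)))
        (fun k _ => mul_nonneg (hx k) (le_of_lt (Real.exp_pos _))) hnM
    have hxn : x n = (x n * Real.exp (-(c * n))) * Real.exp (c * n) := by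
      rw [mul_assoc, ← Real.exp_add]; simp
    rw [hxn]
    exact mul_le_mul_of_nonneg_right (by linarith) (le_of_lt (Real.exp_pos _))

lemma tendsto_log_of_between {x lo hi : ℕ → ℝ} {L : ℝ}
    (hlo : Filter.Tendsto (fun n : ℕ => (1 / (n : ℝ)) * Real.log (lo n)) atTop (nhds L))
    (hhi : Filter.Tendsto (fun n : ℕ => (1 / (n : ℝ)) * Real.log (hi n)) atTop (nhds L))
    (hlopos : ∀ᶠ n : ℕ in atTop, 0 < lo n)
    (h1 : ∀ᶠ n : ℕ in atTop, lo n ≤ x n) (h2 : ∀ᶠ n : ℕ in atTop, x n ≤ hi n) :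
    Filter.Tendsto (fun n : ℕ => (1 / (n : ℝ)) * Real.log (x n)) atTop (nhds L) := by
  apply tendsto_of_tendsto_of_tendsto_of_le_of_le' hlo hhi
  · filter_upwards [hlopos, h1] with n hp h
    exact mul_le_mul_of_nonneg_left (Real.log_le_log hp h) (by positivity)
  · filter_upwards [hlopos, h1, h2] with n hp ha hb
    exact mul_le_mul_of_nonneg_left (Real.log_le_log (lt_of_lt_of_le hp ha) hb) (by positivity)

lemma tendsto_log_mul {N : ℕ → ℝ} {γ : ℝ}
    (hN : Filter.Tendsto (fun n : ℕ => (1 / (n : ℝ)) * Real.log (N n)) atTop (nhds γ))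
    (hNpos : ∀ n, 0 < N n) {c : ℝ} (hc : 0 < c) :
    Filter.Tendsto (fun n : ℕ => (1 / (n : ℝ)) * Real.log (c * N n)) atTop (nhds γ) := by
  have h : ∀ n : ℕ, (1 / (n : ℝ)) * Real.log (c * N n)
      = (1 / (n : ℝ)) * Real.log c + (1 / (n : ℝ)) * Real.log (N n) := by
    intro n
    rw [Real.log_mul (ne_of_gt hc) (ne_of_gt (hNpos n))]
    ring
  simp only [h]
  simpa using (tendsto_inv_mul_const (Real.log c)).add hN

lemma tendsto_log_mul_inv {N : ℕ → ℝ} {γ : ℝ}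
    (hN : Filter.Tendsto (fun n : ℕ => (1 / (n : ℝ)) * Real.log (N n)) atTop (nhds γ))
    (hNpos : ∀ n, 0 < N n) {c : ℝ} (hc : 0 < c) :
    Filter.Tendsto (fun n : ℕ => (1 / (n : ℝ)) * Real.log (c * (N n)⁻¹)) atTop (nhds (-γ)) := by
  have h : ∀ n : ℕ, (1 / (n : ℝ)) * Real.log (c * (N n)⁻¹)
      = (1 / (n : ℝ)) * Real.log c + -((1 / (n : ℝ)) * Real.log (N n)) := by
    intro n
    rw [Real.log_mul (ne_of_gt hc) (ne_of_gt (inv_pos.2 (hNpos n))), Real.log_inv]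
    ring
  simp only [h]
  simpa using (tendsto_inv_mul_const (Real.log c)).add hN.neg

lemma dot_smul_left (c : ℝ) (x y : Fin 2 → ℝ) : dot (c • x) y = c * dot x y := by
  simp [dot]; ring

lemma eNorm_sub_comm (x y : Fin 2 → ℝ) : eNorm (x - y) = eNorm (y - x) := by
  unfold eNorm
  simp only [Pi.sub_apply]
  congr 1
  ring
end Oseledec

open Filter Real Oseledec in
set_option maxHeartbeats 4000000 in
/-- Deterministic Oseledec theorem in dimension 2 (Theorem 3.6): if `U(n) ∈ SL₂(ℝ)` with
`(1/n) log ‖U(n)‖ → γ` and `(1/n) log ‖U(n) U(n-1)⁻¹‖ → 0` (with `U(0) = I`), then there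
is a nonzero `F₀` with `(1/n) log |U(n) F₀| → -γ`, every `F` not a multiple of `F₀`
satisfies `(1/n) log |U(n) F| → γ`, and for all `ε > 0` there is `C(ε) > 0` with
`|U(n) F₀| ≤ C(ε) e^{-(γ-ε)n}` for `n ≥ 1`. -/
theorem oseledec_dim_two
    (U : ℕ → Matrix (Fin 2) (Fin 2) ℝ) (γ : ℝ)
    (hU0 : U 0 = 1)
    (hdet : ∀ n : ℕ, 1 ≤ n → (U n).det = 1)
    (hγ : Filter.Tendsto (fun n : ℕ => (1 / (n : ℝ)) * Real.log (opNorm (U n)))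
      Filter.atTop (nhds γ))
    (hT : Filter.Tendsto (fun n : ℕ => (1 / (n : ℝ)) * Real.log (opNorm (U n * (U (n - 1))⁻¹)))
      Filter.atTop (nhds 0)) :
    ∃ F₀ : Fin 2 → ℝ, F₀ ≠ 0 ∧
      Filter.Tendsto (fun n : ℕ => (1 / (n : ℝ)) * Real.log (eNorm ((U n).mulVec F₀)))
        Filter.atTop (nhds (-γ)) ∧
      (∀ F : Fin 2 → ℝ, (∀ c : ℝ, F ≠ c • F₀) →
        Filter.Tendsto (fun n : ℕ => (1 / (n : ℝ)) * Real.log (eNorm ((U n).mulVec F)))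
          Filter.atTop (nhds γ)) ∧
      (∀ ε : ℝ, 0 < ε → ∃ C : ℝ, 0 < C ∧ ∀ n : ℕ, 1 ≤ n →
        eNorm ((U n).mulVec F₀) ≤ C * Real.exp (-(γ - ε) * n)) := by
  classical
  have hdet' : ∀ n : ℕ, (U n).det = 1 := by
    intro n
    cases n with
    | zero => rw [hU0]; exact Matrix.det_one
    | succ m => exact hdet (m + 1) (Nat.succ_le_succ (Nat.zero_le m))
  choose V hV1 hNge1 hVmin hVlow hVinv using fun n => sl2_key (U n) (hdet' n)
  set N : ℕ → ℝ := fun n => opNorm (U n) with hNdef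
  have hNpos : ∀ n, 0 < N n := fun n => lt_of_lt_of_le one_pos (hNge1 n)
  have hlowF : ∀ (F : Fin 2 → ℝ) (n : ℕ), eNorm F * (N n)⁻¹ ≤ eNorm ((U n).mulVec F) := by
    intro F n
    rw [show eNorm F * (N n)⁻¹ = eNorm F / N n from (div_eq_mul_inv _ _).symm,
      div_le_iff₀ (hNpos n)]
    linarith [hVinv n F]
  have hγnonneg : 0 ≤ γ := by
    apply ge_of_tendsto' hγ
    intro n
    exact mul_nonneg (by positivity) (Real.log_nonneg (hNge1 n))
  have hmulvec_pos : ∀ (F : Fin 2 → ℝ), F ≠ 0 → ∀ n, 0 < eNorm ((U n).mulVec F) := by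
    intro F hF n
    have h1 := hlowF F n
    have h2 : 0 < eNorm F * (N n)⁻¹ := mul_pos (eNorm_pos hF) (inv_pos.2 (hNpos n))
    linarith
  rcases eq_or_lt_of_le hγnonneg with hγz | hγpos
  · -- γ = 0 case
    subst hγz
    have hF0ne : (![1, 0] : Fin 2 → ℝ) ≠ 0 := by
      intro h
      have := congrFun h 0
      norm_num at this
    have hF01 : eNorm (![1, 0] : Fin 2 → ℝ) = 1 := by
      simp [eNorm]
    have tendsto_any : ∀ (F : Fin 2 → ℝ), F ≠ 0 →
        Filter.Tendsto (fun n : ℕ => (1 / (n : ℝ)) * Real.log (eNorm ((U n).mulVec F)))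
          Filter.atTop (nhds 0) := by
      intro F hF
      have hFpos : 0 < eNorm F := eNorm_pos hF
      have hlo := tendsto_log_mul_inv (N := N) hγ hNpos hFpos
      rw [neg_zero] at hlo
      have hhi := tendsto_log_mul (N := N) hγ hNpos hFpos
      apply tendsto_log_of_between hlo hhi
      · filter_upwards with n
        exact mul_pos hFpos (inv_pos.2 (hNpos n))
      · filter_upwards with n
        exact hlowF F n
      · filter_upwards with n
        have := eNorm_mulVec_le (U n) F
        linarith
    refine ⟨![1, 0], hF0ne, ?_, ?_, ?_⟩
    · rw [neg_zero]; exact tendsto_any _ hF0ne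
    · intro F hF
      apply tendsto_any
      intro h
      exact hF 0 (by rw [h, zero_smul])
    · intro ε hε
      have hev : ∀ᶠ n : ℕ in atTop, eNorm ((U n).mulVec ![1, 0]) ≤ 1 * Real.exp (ε * n) := by
        filter_upwards [ev_bounds hγ hNpos hε] with n hn
        have h1 := eNorm_mulVec_le (U n) ![1, 0]
        rw [hF01, mul_one] at h1
        rw [one_mul]
        calc eNorm ((U n).mulVec ![1, 0]) ≤ N n := h1
          _ ≤ Real.exp ((0 + ε) * n) := hn.1
          _ = Real.exp (ε * n) := by norm_num
      obtain ⟨C, hC, hCb⟩ := global_bound (fun n => eNorm_nonneg _) ε one_pos hev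
      refine ⟨C, hC, fun n _ => ?_⟩
      have : (-(0 - ε) * (n : ℝ)) = ε * n := by ring
      rw [this]
      exact hCb n
  · -- γ > 0 case
    set D : ℕ → ℝ := fun n => opNorm (U (n + 1) * (U n)⁻¹) with hDdef
    have hdetD : ∀ n : ℕ, (U (n + 1) * (U n)⁻¹).det = 1 := by
      intro n
      rw [Matrix.det_mul, Matrix.det_nonsing_inv, hdet', hdet']
      norm_num
    have hDkey := fun n => sl2_key _ (hdetD n)
    have hDge1 : ∀ n, 1 ≤ D n := fun n => (hDkey n).choose_spec.2.1
    have hDpos : ∀ n, 0 < D n := fun n => lt_of_lt_of_le one_pos (hDge1 n)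
    have hBinv : ∀ (n : ℕ) (x : Fin 2 → ℝ),
        eNorm x ≤ D n * eNorm ((U (n + 1) * (U n)⁻¹).mulVec x) :=
      fun n => (hDkey n).choose_spec.2.2.2.2
    -- the limit (1/n) log D n → 0
    have h1 : Filter.Tendsto (fun n : ℕ => (1 / ((n : ℝ) + 1)) * Real.log (D n))
        atTop (nhds 0) := by
      have h0 := hT.comp (tendsto_add_atTop_nat 1)
      apply h0.congr
      intro n
      simp only [Function.comp_apply, Nat.add_sub_cancel]
      push_cast
      rfl
    have t2 : Filter.Tendsto (fun n : ℕ => (1 / (n : ℝ)) * Real.log (D n)) atTop (nhds 0) := by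
      have ha : Filter.Tendsto (fun n : ℕ => 1 + 1 / (n : ℝ)) atTop (nhds 1) := by
        simpa using (tendsto_const_nhds (x := (1:ℝ))).add tendsto_one_div_atTop_nhds_zero_nat
      have hquot : Filter.Tendsto (fun n : ℕ => ((n : ℝ) + 1) / n) atTop (nhds 1) := by
        apply ha.congr'
        filter_upwards [eventually_ge_atTop 1] with n hn
        have hne : (n : ℝ) ≠ 0 := by positivity
        field_simp
      have hmul := hquot.mul h1
      rw [one_mul] at hmul
      apply hmul.congr'
      filter_upwards [eventually_ge_atTop 1] with n hn
      have hne : (n : ℝ) ≠ 0 := by positivity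
      have hne1 : (n : ℝ) + 1 ≠ 0 := by positivity
      field_simp
    -- angle bound
    have hang : ∀ n : ℕ, |dot (V (n + 1)) (perp (V n))| * (N n * N (n + 1)) ≤ D n := by
      intro n
      have ha := hVlow n (V (n + 1))
      have hb := hBinv n ((U n).mulVec (V (n + 1)))
      rw [Matrix.mulVec_mulVec] at hb
      have h3 : U (n + 1) * (U n)⁻¹ * U n = U (n + 1) := by
        rw [mul_assoc, Matrix.nonsing_inv_mul _ (by rw [hdet']; exact isUnit_one), mul_one]
      rw [h3, hVmin (n + 1)] at hb
      have h4 : |dot (V (n + 1)) (perp (V n))| * N n ≤ D n * (N (n + 1))⁻¹ := le_trans ha hb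
      have h5 := mul_le_mul_of_nonneg_right h4 (le_of_lt (hNpos (n + 1)))
      calc |dot (V (n + 1)) (perp (V n))| * (N n * N (n + 1))
          = |dot (V (n + 1)) (perp (V n))| * N n * N (n + 1) := by ring
        _ ≤ D n * (N (n + 1))⁻¹ * N (n + 1) := h5
        _ = D n := by
            rw [inv_mul_cancel_right₀ (ne_of_gt (hNpos (n + 1)))]
    -- sign sequence
    set s : ℕ → ℝ := fun n => Nat.rec (motive := fun _ => ℝ) 1
      (fun m sm => if dot (V (m + 1)) (V m) < 0 then -sm else sm) n with hsdef
    have hs_step : ∀ n : ℕ, s (n + 1) = if dot (V (n + 1)) (V n) < 0 then -s n else s n :=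
      fun n => rfl
    have habs : ∀ n, |s n| = 1 := by
      intro n
      induction n with
      | zero => simp [hsdef]
      | succ m ih =>
        rw [hs_step]
        split_ifs
        · rw [abs_neg]; exact ih
        · exact ih
    have hs2 : ∀ n, s n * s n = 1 := by
      intro n
      rw [← abs_mul_abs_self, habs n, one_mul]
    set W : ℕ → Fin 2 → ℝ := fun n => s n • V n with hWdef
    have hW1 : ∀ n, eNorm (W n) = 1 := by
      intro n
      simp only [hWdef]
      rw [eNorm_smul, habs, hV1, mul_one]
    have hWstep : ∀ n, eNorm (W (n + 1) - W n) ≤ Real.sqrt 2 * |dot (V (n + 1)) (perp (V n))| := by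
      intro n
      have hdotW : 0 ≤ dot (W (n + 1)) (W n) := by
        simp only [hWdef, dot_smul_left, dot_smul_right]
        rw [hs_step n]
        split_ifs with hlt
        · have he : s n * (-s n * dot (V (n + 1)) (V n))
              = -(s n * s n) * dot (V (n + 1)) (V n) := by ring
          rw [he, hs2 n]
          linarith
        · have he : s n * (s n * dot (V (n + 1)) (V n))
              = (s n * s n) * dot (V (n + 1)) (V n) := by ring
          rw [he, hs2 n]
          linarith [not_lt.mp hlt]
      have h := step_bound (hW1 (n + 1)) (hW1 n) hdotW
      have heq : |dot (W (n + 1)) (perp (W n))| = |dot (V (n + 1)) (perp (V n))| := by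
        simp only [hWdef, perp_smul, dot_smul_left, dot_smul_right]
        simp only [abs_mul, habs, one_mul]
      rwa [heq] at h
    -- quantitative step bound
    have hstepδ : ∀ δ : ℝ, 0 < δ → δ ≤ γ →
        ∀ᶠ n : ℕ in atTop, eNorm (W (n + 1) - W n) ≤ Real.exp (-(2 * γ - δ) * n) := by
      intro δ hδ hδγ
      have hδ6 : 0 < δ / 6 := by linarith
      have hEN := ev_bounds hγ hNpos hδ6
      have hEN' : ∀ᶠ n : ℕ in atTop, N (n + 1) ≤ Real.exp ((γ + δ / 6) * (n + 1)) ∧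
          Real.exp ((γ - δ / 6) * (n + 1)) ≤ N (n + 1) := by
        obtain ⟨M, hM⟩ := eventually_atTop.mp hEN
        apply eventually_atTop.2 ⟨M, fun n hn => ?_⟩
        have := hM (n + 1) (by omega)
        constructor
        · convert this.1 using 3 <;> push_cast <;> ring
        · convert this.2 using 3 <;> push_cast <;> ring
      have hED := ev_bounds t2 hDpos hδ6
      filter_upwards [hEN, hEN', hED, eventually_ge_atTop (max 1 ⌈2 / δ⌉₊)] with n hn hn' hd hnn
      have hn1 : (1:ℕ) ≤ n := le_trans (le_max_left _ _) hnn
      have hnr : (0:ℝ) ≤ (n:ℝ) := Nat.cast_nonneg n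
      have hceil : (2 / δ : ℝ) ≤ n := by
        calc (2 / δ : ℝ) ≤ (⌈2 / δ⌉₊ : ℝ) := Nat.le_ceil _
          _ ≤ n := by exact_mod_cast le_trans (le_max_right _ _) hnn
      -- bound |dot|
      have hdot : |dot (V (n + 1)) (perp (V n))| ≤ D n * (N n)⁻¹ * (N (n + 1))⁻¹ := by
        have h1 := hang n
        have h2 : 0 < N n * N (n + 1) := mul_pos (hNpos n) (hNpos (n + 1))
        rw [show D n * (N n)⁻¹ * (N (n + 1))⁻¹ = D n / (N n * N (n + 1)) by
          field_simp]
        rw [le_div_iff₀ h2]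
        exact h1
      have hinv1 : (N n)⁻¹ ≤ Real.exp (-((γ - δ / 6) * n)) := by
        rw [Real.exp_neg]
        exact inv_anti₀ (Real.exp_pos _) hn.2
      have hinv2 : (N (n + 1))⁻¹ ≤ Real.exp (-((γ - δ / 6) * (n + 1))) := by
        rw [Real.exp_neg]
        exact inv_anti₀ (Real.exp_pos _) hn'.2
      have hD1 : D n ≤ Real.exp ((0 + δ / 6) * n) := hd.1
      have hprod : D n * (N n)⁻¹ * (N (n + 1))⁻¹
          ≤ Real.exp ((0 + δ / 6) * n) * Real.exp (-((γ - δ / 6) * n))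
            * Real.exp (-((γ - δ / 6) * (n + 1))) := by
        apply mul_le_mul
        · apply mul_le_mul hD1 hinv1 (inv_nonneg.2 (le_of_lt (hNpos n)))
            (le_of_lt (Real.exp_pos _))
        · exact hinv2
        · exact inv_nonneg.2 (le_of_lt (hNpos (n + 1)))
        · positivity
      rw [← Real.exp_add, ← Real.exp_add] at hprod
      have hsqrt2 : Real.sqrt 2 ≤ Real.exp (δ / 2 * n) := by
        have ha : Real.sqrt 2 ≤ 2 := by
          nlinarith [Real.sq_sqrt (by norm_num : (0:ℝ) ≤ 2), Real.sqrt_nonneg 2]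
        have hb : (2:ℝ) ≤ Real.exp 1 := by
          have := Real.add_one_le_exp 1
          linarith
        have hc : (1:ℝ) ≤ δ / 2 * n := by
          rw [div_mul_eq_mul_div, le_div_iff₀ (by norm_num : (0:ℝ) < 2)]
          calc (1:ℝ) * 2 = 2 := by ring
            _ = (2 / δ) * δ := by field_simp
            _ ≤ (n:ℝ) * δ := mul_le_mul_of_nonneg_right hceil (le_of_lt hδ)
            _ = δ * n := by ring
        calc Real.sqrt 2 ≤ 2 := ha
          _ ≤ Real.exp 1 := hb
          _ ≤ Real.exp (δ / 2 * n) := Real.exp_le_exp.mpr hc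
      calc eNorm (W (n + 1) - W n) ≤ Real.sqrt 2 * |dot (V (n + 1)) (perp (V n))| := hWstep n
        _ ≤ Real.exp (δ / 2 * n) *
            Real.exp ((0 + δ / 6) * n + -((γ - δ / 6) * n) + -((γ - δ / 6) * (n + 1))) := by
          apply mul_le_mul hsqrt2 (le_trans hdot hprod) (abs_nonneg _)
            (le_of_lt (Real.exp_pos _))
        _ = Real.exp (δ / 2 * n + ((0 + δ / 6) * n + -((γ - δ / 6) * n)
            + -((γ - δ / 6) * (n + 1)))) := by rw [← Real.exp_add]
        _ ≤ Real.exp (-(2 * γ - δ) * n) := by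
          apply Real.exp_le_exp.mpr
          have hγδ : 0 ≤ γ - δ / 6 := by linarith
          nlinarith [hγδ, hnr]
    -- geometric convergence
    have hcauchy_aux : ∀ δ : ℝ, 0 < δ → δ ≤ γ → ∃ C : ℝ, 0 < C ∧ ∀ n : ℕ,
        dist (toE (W n)) (toE (W (n + 1))) ≤ C * (Real.exp (-(2 * γ - δ))) ^ n := by
      intro δ hδ hδγ
      obtain ⟨M, hM⟩ := eventually_atTop.mp (hstepδ δ hδ hδγ)
      set r := Real.exp (-(2 * γ - δ)) with hr
      have hrpos : 0 < r := Real.exp_pos _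
      have hrle : r ≤ 1 := Real.exp_le_one_iff.mpr (by linarith)
      refine ⟨2 / r ^ M, by positivity, ?_⟩
      intro n
      have hdist : dist (toE (W n)) (toE (W (n + 1))) = eNorm (W (n + 1) - W n) := by
        rw [dist_comm, dist_eq_norm, ← toE_sub, ← eNorm_eq]
      rw [hdist]
      have hrn : Real.exp (-(2 * γ - δ) * n) = r ^ n := by
        rw [hr, ← Real.exp_nat_mul, mul_comm]
      by_cases hn : M ≤ n
      · have h1 := hM n hn
        rw [hrn] at h1
        have h2 : 1 ≤ 2 / r ^ M := by
          rw [le_div_iff₀ (by positivity)]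
          have := pow_le_one₀ (le_of_lt hrpos) hrle (n := M)
          linarith
        calc eNorm (W (n + 1) - W n) ≤ r ^ n := h1
          _ = 1 * r ^ n := (one_mul _).symm
          _ ≤ (2 / r ^ M) * r ^ n := mul_le_mul_of_nonneg_right h2 (by positivity)
      · have h2 : eNorm (W (n + 1) - W n) ≤ 2 := by
          have h3 := eNorm_sub_le (W (n + 1)) (W n)
          have h4 := hW1 (n + 1)
          have h5 := hW1 n
          linarith
        have hpow : r ^ M ≤ r ^ n :=
          pow_le_pow_of_le_one (le_of_lt hrpos) hrle (le_of_lt (lt_of_not_ge hn))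
        calc eNorm (W (n + 1) - W n) ≤ 2 := h2
          _ = (2 / r ^ M) * r ^ M := by field_simp
          _ ≤ (2 / r ^ M) * r ^ n := mul_le_mul_of_nonneg_left hpow (by positivity)
    -- Cauchy, limit F₀
    obtain ⟨C₁, hC₁, hb₁⟩ := hcauchy_aux γ hγpos le_rfl
    have hr1 : Real.exp (-(2 * γ - γ)) < 1 := Real.exp_lt_one_iff.mpr (by linarith)
    have hcauchy : CauchySeq (fun n => toE (W n)) := cauchySeq_of_le_geometric _ C₁ hr1 hb₁
    obtain ⟨L, hL⟩ := cauchySeq_tendsto_of_complete hcauchy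
    set F₀ : Fin 2 → ℝ := WithLp.equiv 2 _ L with hF₀def
    have hF₀E : toE F₀ = L := by simp [toE, hF₀def]
    have hrate : ∀ δ : ℝ, 0 < δ → δ ≤ γ → ∃ C : ℝ, 0 < C ∧ ∀ n : ℕ,
        eNorm (W n - F₀) ≤ C * Real.exp (-(2 * γ - δ) * n) := by
      intro δ hδ hδγ
      obtain ⟨C, hC, hb⟩ := hcauchy_aux δ hδ hδγ
      have hrlt : Real.exp (-(2 * γ - δ)) < 1 := Real.exp_lt_one_iff.mpr (by linarith)
      have h1r : 0 < 1 - Real.exp (-(2 * γ - δ)) := by linarith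
      refine ⟨C / (1 - Real.exp (-(2 * γ - δ))), div_pos hC h1r, ?_⟩
      intro n
      have h := dist_le_of_le_geometric_of_tendsto _ _ hrlt hb hL n
      rw [← hF₀E] at h
      have hdist : dist (toE (W n)) (toE F₀) = eNorm (W n - F₀) := by
        rw [dist_eq_norm, ← toE_sub, ← eNorm_eq]
      rw [hdist] at h
      calc eNorm (W n - F₀) ≤ C * Real.exp (-(2 * γ - δ)) ^ n / (1 - Real.exp (-(2 * γ - δ))) :=
            h
        _ = (C / (1 - Real.exp (-(2 * γ - δ)))) * Real.exp (-(2 * γ - δ)) ^ n := by ring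
        _ = (C / (1 - Real.exp (-(2 * γ - δ)))) * Real.exp (-(2 * γ - δ) * n) := by
            rw [← Real.exp_nat_mul, mul_comm (n : ℝ)]
    -- F₀ is a unit vector
    have hF₀1 : eNorm F₀ = 1 := by
      have h1 : Filter.Tendsto (fun n => ‖toE (W n)‖) atTop (nhds ‖L‖) := hL.norm
      have h2 : (fun n => ‖toE (W n)‖) = fun _ => (1 : ℝ) :=
        funext fun n => by rw [← eNorm_eq, hW1]
      rw [h2] at h1
      have h3 : ‖L‖ = 1 := tendsto_nhds_unique h1 tendsto_const_nhds
      rw [eNorm_eq, hF₀E, h3]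
    have hF₀ne : F₀ ≠ 0 := by
      intro h
      rw [h, eNorm_zero] at hF₀1
      norm_num at hF₀1
    -- main upper bound for F₀
    have hupp : ∀ ε : ℝ, 0 < ε → ε ≤ γ → ∃ C : ℝ, 0 < C ∧ ∀ᶠ n : ℕ in atTop,
        eNorm ((U n).mulVec F₀) ≤ C * Real.exp ((-γ + ε) * n) := by
      intro ε hε hεγ
      have hδpos : 0 < ε / 2 := by linarith
      obtain ⟨C, hC, hrateb⟩ := hrate (ε / 2) hδpos (by linarith)
      refine ⟨1 + C, by linarith, ?_⟩
      filter_upwards [ev_bounds hγ hNpos hδpos] with n hn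
      have hsplit : (U n).mulVec F₀ = (U n).mulVec (W n) + (U n).mulVec (F₀ - W n) := by
        have he : W n + (F₀ - W n) = F₀ := by abel
        rw [← Matrix.mulVec_add, he]
      have h1 : eNorm ((U n).mulVec (W n)) = (N n)⁻¹ := by
        have : (U n).mulVec (W n) = s n • (U n).mulVec (V n) := by
          simp only [hWdef]
          rw [Matrix.mulVec_smul]
        rw [this, eNorm_smul, habs, one_mul, hVmin n]
      have h2 : eNorm ((U n).mulVec (F₀ - W n)) ≤ N n * eNorm (F₀ - W n) :=
        eNorm_mulVec_le _ _
      have h3 : eNorm (F₀ - W n) ≤ C * Real.exp (-(2 * γ - ε / 2) * n) := by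
        rw [eNorm_sub_comm]
        exact hrateb n
      have h4 : (N n)⁻¹ ≤ Real.exp (-((γ - ε / 2) * n)) := by
        rw [Real.exp_neg]
        exact inv_anti₀ (Real.exp_pos _) hn.2
      have h5 : N n ≤ Real.exp ((γ + ε / 2) * n) := hn.1
      have hnr : (0:ℝ) ≤ (n : ℝ) := Nat.cast_nonneg n
      calc eNorm ((U n).mulVec F₀)
          ≤ eNorm ((U n).mulVec (W n)) + eNorm ((U n).mulVec (F₀ - W n)) := by
            rw [hsplit]; exact eNorm_add_le _ _
        _ ≤ (N n)⁻¹ + N n * (C * Real.exp (-(2 * γ - ε / 2) * n)) := by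
            have := le_trans h2 (mul_le_mul_of_nonneg_left h3 (le_of_lt (hNpos n)))
            rw [h1]
            linarith
        _ ≤ Real.exp (-((γ - ε / 2) * n))
            + Real.exp ((γ + ε / 2) * n) * (C * Real.exp (-(2 * γ - ε / 2) * n)) := by
            have h6 : 0 ≤ C * Real.exp (-(2 * γ - ε / 2) * n) := by positivity
            have h7 := mul_le_mul_of_nonneg_right h5 h6
            linarith
        _ = Real.exp (-((γ - ε / 2) * n))
            + C * Real.exp ((γ + ε / 2) * n + -(2 * γ - ε / 2) * n) := by
            rw [Real.exp_add]; ring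
        _ ≤ 1 * Real.exp ((-γ + ε) * n) + C * Real.exp ((-γ + ε) * n) := by
            have e1 : Real.exp (-((γ - ε / 2) * n)) ≤ Real.exp ((-γ + ε) * n) := by
              apply Real.exp_le_exp.mpr
              nlinarith
            have e2 : ((γ + ε / 2) * n + -(2 * γ - ε / 2) * n : ℝ) = (-γ + ε) * n := by ring
            rw [e2, one_mul]
            linarith
        _ = (1 + C) * Real.exp ((-γ + ε) * n) := by ring
    have hxpos : ∀ n, 0 < eNorm ((U n).mulVec F₀) := hmulvec_pos F₀ hF₀ne
    -- Tendsto for F₀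
    have htendF₀ : Filter.Tendsto (fun n : ℕ => (1 / (n : ℝ)) * Real.log (eNorm ((U n).mulVec F₀)))
        atTop (nhds (-γ)) := by
      rw [Metric.tendsto_atTop]
      intro ε hε
      set ε₁ := min (ε / 2) γ with hε₁def
      have hε₁pos : 0 < ε₁ := lt_min (by linarith) hγpos
      have hε₁le : ε₁ ≤ ε / 2 := min_le_left _ _
      obtain ⟨C, hC, hev⟩ := hupp ε₁ hε₁pos (min_le_right _ _)
      have hlogC : Filter.Tendsto (fun n : ℕ => (1 / (n : ℝ)) * Real.log C) atTop (nhds 0) :=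
        tendsto_inv_mul_const _
      have hev2 : ∀ᶠ n : ℕ in atTop, |(1 / (n : ℝ)) * Real.log C| < ε / 2 := by
        have := Metric.tendsto_atTop.mp hlogC (ε / 2) (by linarith)
        obtain ⟨M, hM⟩ := this
        apply eventually_atTop.2 ⟨M, fun n hn => ?_⟩
        have := hM n hn
        rwa [Real.dist_eq, sub_zero] at this
      have hev3 : ∀ᶠ n : ℕ in atTop, |(1 / (n : ℝ)) * Real.log (N n) - γ| < ε := by
        have := Metric.tendsto_atTop.mp hγ ε hε
        obtain ⟨M, hM⟩ := this
        apply eventually_atTop.2 ⟨M, fun n hn => ?_⟩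
        have := hM n hn
        rwa [Real.dist_eq] at this
      have hcomb : ∀ᶠ n : ℕ in atTop,
          dist ((1 / (n : ℝ)) * Real.log (eNorm ((U n).mulVec F₀))) (-γ) < ε := by
        filter_upwards [hev, hev2, hev3, eventually_ge_atTop 1] with n h1 h2 h3 hn1
        have hnpos : (0:ℝ) < n := by exact_mod_cast hn1
        have hnne : (n:ℝ) ≠ 0 := ne_of_gt hnpos
        set x := eNorm ((U n).mulVec F₀) with hxdef
        have hxp : 0 < x := hxpos n
        -- upper bound
        have hub : (1 / (n : ℝ)) * Real.log x < -γ + ε := by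
          have hlogle : Real.log x ≤ Real.log C + (-γ + ε₁) * n := by
            have := Real.log_le_log hxp h1
            rwa [Real.log_mul (ne_of_gt hC) (ne_of_gt (Real.exp_pos _)), Real.log_exp] at this
          have hstep : (1 / (n : ℝ)) * Real.log x
              ≤ (1 / (n : ℝ)) * Real.log C + (-γ + ε₁) := by
            have := mul_le_mul_of_nonneg_left hlogle (le_of_lt (one_div_pos.mpr hnpos))
            calc (1 / (n : ℝ)) * Real.log x
                ≤ (1 / (n : ℝ)) * (Real.log C + (-γ + ε₁) * n) := this
              _ = (1 / (n : ℝ)) * Real.log C + (-γ + ε₁) := by field_simp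
          have habs2 : (1 / (n : ℝ)) * Real.log C < ε / 2 := lt_of_abs_lt h2
          calc (1 / (n : ℝ)) * Real.log x ≤ (1 / (n : ℝ)) * Real.log C + (-γ + ε₁) := hstep
            _ < ε / 2 + (-γ + ε / 2) := by linarith
            _ = -γ + ε := by ring
        -- lower bound
        have hlb : -γ - ε < (1 / (n : ℝ)) * Real.log x := by
          have hx1 : (N n)⁻¹ ≤ x := by
            have := hlowF F₀ n
            rwa [hF₀1, one_mul] at this
          have hlog1 : -Real.log (N n) ≤ Real.log x := by
            have := Real.log_le_log (inv_pos.2 (hNpos n)) hx1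
            rwa [Real.log_inv] at this
          have h4 : (1 / (n : ℝ)) * Real.log (N n) < γ + ε := by
            have := lt_of_abs_lt h3
            linarith
          have h5 : -((1 / (n : ℝ)) * Real.log (N n)) ≤ (1 / (n : ℝ)) * Real.log x := by
            have := mul_le_mul_of_nonneg_left hlog1 (le_of_lt (one_div_pos.mpr hnpos))
            calc -((1 / (n : ℝ)) * Real.log (N n)) = (1 / (n : ℝ)) * -Real.log (N n) := by ring
              _ ≤ (1 / (n : ℝ)) * Real.log x := this
          linarith
        rw [Real.dist_eq, abs_lt]
        constructor <;> linarith
      exact eventually_atTop.mp hcomb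
    -- generic F
    have hgen : ∀ F : Fin 2 → ℝ, (∀ c : ℝ, F ≠ c • F₀) →
        Filter.Tendsto (fun n : ℕ => (1 / (n : ℝ)) * Real.log (eNorm ((U n).mulVec F)))
          atTop (nhds γ) := by
      intro F hF
      have hFne : F ≠ 0 := fun h => hF 0 (by rw [h, zero_smul])
      have hFpos : 0 < eNorm F := eNorm_pos hFne
      set b := dot F (perp F₀) with hbdef
      have hbne : b ≠ 0 := by
        intro hb
        apply hF (dot F F₀)
        have hs' : F₀ 0 ^ 2 + F₀ 1 ^ 2 = 1 := by
          have h := eNorm_sq F₀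
          rw [hF₀1] at h
          linarith
        have hb' : F 0 * (-F₀ 1) + F 1 * F₀ 0 = 0 := by
          rw [hbdef] at hb
          unfold dot at hb
          rwa [perp_zero, perp_one] at hb
        funext i
        fin_cases i <;>
          simp only [Pi.smul_apply, smul_eq_mul, Fin.zero_eta, Fin.mk_one, Fin.isValue] <;>
          unfold dot
        · linear_combination (-(F₀ 1)) * hb' + (-(F 0)) * hs'
        · linear_combination (F₀ 0) * hb' + (-(F 1)) * hs'
      have hbabs : 0 < |b| := abs_pos.2 hbne
      have hWlim : ∀ᶠ n : ℕ in atTop, |b| / 2 ≤ |dot F (perp (W n))| := by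
        obtain ⟨C, hC, hrb⟩ := hrate γ hγpos le_rfl
        have hto0 : Filter.Tendsto (fun n : ℕ => C * Real.exp (-(2 * γ - γ)) ^ n)
            atTop (nhds 0) := by
          have := (tendsto_pow_atTop_nhds_zero_of_lt_one
            (le_of_lt (Real.exp_pos (-(2 * γ - γ)))) hr1).const_mul C
          simpa using this
        have hrb' : ∀ n : ℕ, eNorm (W n - F₀) ≤ C * Real.exp (-(2 * γ - γ)) ^ n := by
          intro n
          have h0 := hrb n
          rwa [show (-(2 * γ - γ) * (n:ℝ)) = (n:ℝ) * (-(2 * γ - γ)) by ring,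
            Real.exp_nat_mul] at h0
        have hsq : Filter.Tendsto (fun n => eNorm (W n - F₀)) atTop (nhds 0) :=
          squeeze_zero (fun n => eNorm_nonneg _) hrb' hto0
        have hdiff : ∀ n, |dot F (perp (W n)) - b| ≤ eNorm F * eNorm (W n - F₀) := by
          intro n
          have h1 : dot F (perp (W n)) - b = dot F (perp (W n - F₀)) := by
            rw [hbdef]
            unfold dot
            simp only [perp_zero, perp_one, Pi.sub_apply]
            ring
          rw [h1]
          calc |dot F (perp (W n - F₀))| ≤ eNorm F * eNorm (perp (W n - F₀)) := abs_dot_le _ _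
            _ = eNorm F * eNorm (W n - F₀) := by rw [eNorm_perp]
        have habs2 : Filter.Tendsto (fun n => eNorm F * eNorm (W n - F₀)) atTop (nhds 0) := by
          simpa using hsq.const_mul (eNorm F)
        filter_upwards [habs2.eventually_lt_const (show (0:ℝ) < |b| / 2 by linarith)] with n hn
        have h2 := hdiff n
        have h3 : |b| - |dot F (perp (W n))| ≤ |dot F (perp (W n)) - b| := by
          have := abs_sub_abs_le_abs_sub b (dot F (perp (W n)))
          rw [abs_sub_comm] at this
          linarith
        linarith
      have hVW : ∀ n, |dot F (perp (W n))| = |dot F (perp (V n))| := by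
        intro n
        simp only [hWdef, perp_smul, dot_smul_right, abs_mul, habs, one_mul]
      apply tendsto_log_of_between (lo := fun n => (|b| / 2) * N n)
        (hi := fun n => eNorm F * N n)
        (tendsto_log_mul hγ hNpos (by linarith)) (tendsto_log_mul hγ hNpos hFpos)
      · filter_upwards with n
        exact mul_pos (by linarith) (hNpos n)
      · filter_upwards [hWlim] with n hn
        calc (|b| / 2) * N n ≤ |dot F (perp (V n))| * N n := by
              apply mul_le_mul_of_nonneg_right _ (le_of_lt (hNpos n))
              rw [← hVW]
              exact hn
          _ ≤ eNorm ((U n).mulVec F) := hVlow n F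
      · filter_upwards with n
        have := eNorm_mulVec_le (U n) F
        calc eNorm ((U n).mulVec F) ≤ N n * eNorm F := this
          _ = eNorm F * N n := by ring
    -- final exponential bound
    have hfinal : ∀ ε : ℝ, 0 < ε → ∃ C : ℝ, 0 < C ∧ ∀ n : ℕ, 1 ≤ n →
        eNorm ((U n).mulVec F₀) ≤ C * Real.exp (-(γ - ε) * n) := by
      intro ε hε
      set ε' := min ε γ with hε'def
      have hε'pos : 0 < ε' := lt_min hε hγpos
      obtain ⟨C, hC, hev⟩ := hupp ε' hε'pos (min_le_right _ _)
      have hev' : ∀ᶠ n : ℕ in atTop, eNorm ((U n).mulVec F₀) ≤ C * Real.exp ((-γ + ε) * n) := by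
        filter_upwards [hev] with n hn
        have h1 : ((-γ + ε') * n : ℝ) ≤ (-γ + ε) * n := by
          apply mul_le_mul_of_nonneg_right _ (Nat.cast_nonneg n)
          have := min_le_left ε γ
          linarith
        calc eNorm ((U n).mulVec F₀) ≤ C * Real.exp ((-γ + ε') * n) := hn
          _ ≤ C * Real.exp ((-γ + ε) * n) :=
            mul_le_mul_of_nonneg_left (Real.exp_le_exp.mpr h1) (le_of_lt hC)
      obtain ⟨C', hC', hb'⟩ := global_bound (fun n => eNorm_nonneg _) (-γ + ε) hC hev'
      refine ⟨C', hC', fun n _ => ?_⟩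
      have he : (-(γ - ε) * (n:ℝ)) = (-γ + ε) * n := by ring
      rw [he]
      exact hb' n
    exact ⟨F₀, hF₀ne, htendF₀, hgen, hfinal⟩
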